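/- Let A = {0 = a_0 < a_1 < ... < a_{ℓ+1} = b} be a finite set of integers with gcd(a_1, ..., a_{ℓ+1}) = 1 and 2 ≤ ℓ ≤ b−2. Then N_A* ≤ b − ℓ − 1, except when A = {0,1,...,b} \ {a} for some 1 ≤ a ≤ b−1 (in which case N_A* = 2 = b−ℓ), or when A = {0,1} ∪ {a+1,...,b} for some 2 ≤ a ≤ b−2 (in which case N_A* = b−ℓ). -/

import Mathlib

open Pointwise

/-- The `N`-fold sumset of a finite set `A` (sums of `N` not-necessarily-distinct elements),
with the `0`-fold sumset being `{0}`. -/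
def nfold {α : Type*} [AddMonoid α] [DecidableEq α] (A : Finset α) : ℕ → Finset α
  | 0 => {0}
  | n + 1 => nfold A n + A

/-- `postP A` is the set of integers expressible as a finite (nonempty) sum of elements of `A`. -/
def postP (A : Finset ℤ) : Set ℤ := {n | ∃ N : ℕ, 1 ≤ N ∧ n ∈ nfold A N}

/-- The exceptional set `E(A)`. -/
def postE (A : Finset ℤ) : Set ℤ := {n | 1 ≤ n ∧ n ∉ postP A}

/-- `n_{a,A}`: the least `n ≥ 1` with `n ∈ P(A)` and `n ≡ a (mod b)`. -/
noncomputable def nmin (A : Finset ℤ) (b a : ℤ) : ℤ :=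
  sInf {n : ℤ | 1 ≤ n ∧ n ∈ postP A ∧ n % b = a % b}

/-- `N_{a,A}`: the least `N ≥ 1` with `n_{a,A} ∈ NA`. -/
noncomputable def Nmin (A : Finset ℤ) (b a : ℤ) : ℕ :=
  sInf {N : ℕ | 1 ≤ N ∧ nmin A b a ∈ nfold A N}

/-- `N_A^* = max_{1 ≤ a ≤ b-1} N_{a,A}`. -/
noncomputable def Nstar (A : Finset ℤ) (b : ℤ) : ℕ :=
  (Finset.Icc 1 (b - 1)).sup (fun a => Nmin A b a)

lemma mem_nfold {A : Finset ℤ} {N : ℕ} {n : ℤ} :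
    n ∈ nfold A N ↔ ∃ m : Multiset ℤ, Multiset.card m = N ∧ (∀ x ∈ m, x ∈ A) ∧ m.sum = n := by
  induction N generalizing n with
  | zero =>
    constructor
    · intro h
      refine ⟨0, by simp, by simp, ?_⟩
      simp only [nfold, Finset.mem_singleton] at h
      simp [h]
    · rintro ⟨m, hc, _, hs⟩
      rw [Multiset.card_eq_zero] at hc
      subst hc
      simp only [Multiset.sum_zero] at hs
      simp [nfold, hs.symm]
  | succ N ih =>
    constructor
    · intro h
      simp only [nfold, Finset.mem_add] at h
      obtain ⟨y, hy, z, hz, hyz⟩ := h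
      obtain ⟨m, hc, hmem, hs⟩ := ih.1 hy
      exact ⟨z ::ₘ m, by simp [hc], by
        intro x hx
        rcases Multiset.mem_cons.1 hx with h | h
        · exact h ▸ hz
        · exact hmem x h, by simp [hs, hyz.symm]; ring⟩
    · rintro ⟨m, hc, hmem, hs⟩
      have : m ≠ 0 := by
        intro h; subst h; simp at hc
      obtain ⟨z, hz⟩ := Multiset.exists_mem_of_ne_zero this
      obtain ⟨t, ht⟩ := Multiset.exists_cons_of_mem hz
      subst ht
      simp only [nfold, Finset.mem_add]
      refine ⟨t.sum, ih.2 ⟨t, by simpa using hc, fun x hx => hmem x (Multiset.mem_cons_of_mem hx), rfl⟩,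
        z, hmem z (Multiset.mem_cons_self _ _), ?_⟩
      simp only [Multiset.sum_cons] at hs
      linarith
lemma mem_postP {A : Finset ℤ} {n : ℤ} :
    n ∈ postP A ↔ ∃ m : Multiset ℤ, m ≠ 0 ∧ (∀ x ∈ m, x ∈ A) ∧ m.sum = n := by
  constructor
  · rintro ⟨N, hN, h⟩
    obtain ⟨m, hc, hmem, hs⟩ := mem_nfold.1 h
    exact ⟨m, by rintro rfl; simp at hc; omega, hmem, hs⟩
  · rintro ⟨m, hm, hmem, hs⟩
    refine ⟨Multiset.card m, ?_, mem_nfold.2 ⟨m, rfl, hmem, hs⟩⟩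
    have := Multiset.card_pos.2 hm
    omega

lemma mod_le {b n r : ℤ} (hb : 0 < b) (hn : 1 ≤ n) (hr0 : 0 ≤ r) (hrb : r < b)
    (h : n % b = r % b) : r ≤ n := by
  have hd : b ∣ r - n := Int.ModEq.dvd h
  by_contra hlt
  push_neg at hlt
  have : b ≤ r - n := Int.le_of_dvd (by omega) hd
  omega

lemma dvd_small_eq {b d : ℤ} (hb : 0 < b) (hd : b ∣ d) (h1 : -b < d) (h2 : d < b) : d = 0 := by
  rcases hd with ⟨k, rfl⟩
  have hk1 : k < 1 := by by_contra h; push_neg at h; nlinarith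
  have hk2 : -1 < k := by by_contra h; push_neg at h; nlinarith
  have : k = 0 := by omega
  simp [this]

lemma key (A : Finset ℤ) (b : ℤ) (ℓ : ℕ)
    (hcard : A.card = ℓ + 2) (hℓ2 : 2 ≤ ℓ) (hℓb : (ℓ : ℤ) ≤ b - 2)
    (h0 : 0 ∈ A) (hb : b ∈ A)
    (hmin : ∀ a ∈ A, 0 ≤ a) (hmax : ∀ a ∈ A, a ≤ b)
    (a n : ℤ) (N : ℕ) (ha1 : 1 ≤ a) (ha2 : a ≤ b - 1)
    (hn1 : 1 ≤ n) (hmod : n % b = a % b)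
    (hmem : n ∈ nfold A N) (hN1 : 1 ≤ N)
    (hnmin : ∀ m', 1 ≤ m' → m' ∈ postP A → m' % b = a % b → n ≤ m')
    (hNmin : ∀ M, 1 ≤ M → n ∈ nfold A M → N ≤ M) :
    (N : ℤ) ≤ b - ℓ ∧ ((N : ℤ) = b - ℓ → 3 ≤ N → A = {0, 1} ∪ Finset.Icc ((N : ℤ) + 1) b) := by
  have hbpos : (0 : ℤ) < b := by omega
  have hb4 : (4 : ℤ) ≤ b := by omega
  have hmoda : a % b = a := Int.emod_eq_of_lt (by omega) (by omega)
  -- the multiset representation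
  obtain ⟨m, hcardm, hmA, hsum⟩ := mem_nfold.1 hmem
  -- all entries lie in [1, b-1]
  have hrange : ∀ x ∈ m, x ∈ A ∧ 1 ≤ x ∧ x ≤ b - 1 := by
    intro x hx
    refine ⟨hmA x hx, ?_⟩
    have hx0 : x ≠ 0 := by
      rintro rfl
      obtain ⟨t, ht⟩ := Multiset.exists_cons_of_mem hx
      have htsum : t.sum = n := by
        have := hsum; rw [ht, Multiset.sum_cons] at this; linarith
      have htne : t ≠ 0 := by
        rintro rfl; simp at htsum; omega
      have htcard : 1 ≤ Multiset.card t := Multiset.card_pos.2 htne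
      have hNt : Multiset.card t ≥ 1 := htcard
      have : n ∈ nfold A (Multiset.card t) :=
        mem_nfold.2 ⟨t, rfl, fun y hy => hmA y (ht ▸ Multiset.mem_cons_of_mem hy), htsum⟩
      have hle := hNmin _ hNt this
      have : Multiset.card m = Multiset.card t + 1 := by rw [ht]; simp
      omega
    have hxb : x ≠ b := by
      intro hxe
      obtain ⟨t, ht⟩ := Multiset.exists_cons_of_mem hx
      have htsum : t.sum = n - b := by
        have := hsum; rw [ht, Multiset.sum_cons, hxe] at this; linarith
      have htpos : 0 ≤ t.sum := Multiset.sum_nonneg fun y hy =>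
        hmin y (hmA y (ht ▸ Multiset.mem_cons_of_mem hy))
      have hnb : n - b ≠ 0 := by
        intro h
        have : n % b = 0 := by
          have : n = b := by omega
          simp [this]
        omega
      have hnb1 : 1 ≤ n - b := by omega
      have htne : t ≠ 0 := by rintro rfl; simp at htsum; omega
      have : n - b ∈ postP A :=
        mem_postP.2 ⟨t, htne, fun y hy => hmA y (ht ▸ Multiset.mem_cons_of_mem hy), htsum⟩
      have hmod' : (n - b) % b = a % b := by
        rw [show n - b = n + (-1) * b by ring, Int.add_mul_emod_self_right]; exact hmod
      have := hnmin _ hnb1 this hmod'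
      omega
    have := hmin x (hmA x hx)
    have := hmax x (hmA x hx)
    omega
  -- F1
  have F1 : ∀ D : Multiset ℤ, D ≤ m → D ≠ 0 → D ≠ m → ¬ ((b : ℤ) ∣ D.sum) := by
    intro D hD hD0 hDm hdvd
    set C := m - D with hC
    have hCD : C + D = m := tsub_add_cancel_of_le hD
    have hCsum : C.sum = n - D.sum := by
      have := congrArg Multiset.sum hCD
      rw [Multiset.sum_add] at this
      omega
    have hCmem : ∀ x ∈ C, x ∈ m := fun x hx => Multiset.mem_of_le (Multiset.sub_le_self _ _) hx
    have hCne : C ≠ 0 := by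
      rintro h
      rw [h, zero_add] at hCD
      exact hDm hCD
    have hDpos : 1 ≤ D.sum := by
      have h1 : Multiset.card D • (1:ℤ) ≤ D.sum := Multiset.card_nsmul_le_sum
        (fun x hx => (hrange x (Multiset.mem_of_le hD hx)).2.1)
      have h2 : 1 ≤ Multiset.card D := Multiset.card_pos.2 hD0
      simp only [nsmul_eq_mul, mul_one] at h1
      have : (1:ℤ) ≤ (Multiset.card D : ℤ) := by exact_mod_cast h2
      omega
    have hCpos : 1 ≤ C.sum := by
      have h1 : Multiset.card C • (1:ℤ) ≤ C.sum := Multiset.card_nsmul_le_sum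
        (fun x hx => (hrange x (hCmem x hx)).2.1)
      have h2 : 1 ≤ Multiset.card C := Multiset.card_pos.2 hCne
      simp only [nsmul_eq_mul, mul_one] at h1
      have : (1:ℤ) ≤ (Multiset.card C : ℤ) := by exact_mod_cast h2
      omega
    have hCP : C.sum ∈ postP A := mem_postP.2 ⟨C, hCne, fun y hy => hmA y (hCmem y hy), rfl⟩
    have hCmod : C.sum % b = a % b := by
      obtain ⟨k, hk⟩ := hdvd
      rw [hCsum, hk, show n - b * k = n + (-k) * b by ring, Int.add_mul_emod_self_right]
      exact hmod
    have := hnmin _ hCpos hCP hCmod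
    omega
  -- F2
  have F2 : ∀ D : Multiset ℤ, D ≤ m → 2 ≤ Multiset.card D →
      ∀ c ∈ A, 1 ≤ c → c ≤ b - 1 → ¬ ((b : ℤ) ∣ (D.sum - c)) := by
    intro D hD hc2 c hcA hc1 hcb hdvd
    set C := m - D with hC
    have hCD : C + D = m := tsub_add_cancel_of_le hD
    have hCsum : C.sum = n - D.sum := by
      have := congrArg Multiset.sum hCD
      rw [Multiset.sum_add] at this
      omega
    have hCmem : ∀ x ∈ C, x ∈ m := fun x hx => Multiset.mem_of_le (Multiset.sub_le_self _ _) hx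
    have hCcard : Multiset.card C = N - Multiset.card D := by
      have := congrArg (fun s => Multiset.card s) hCD
      simp only [Multiset.card_add] at this
      omega
    have hDcard : Multiset.card D ≤ N := by
      rw [← hcardm]; exact Multiset.card_le_card hD
    have hDsum2 : 2 ≤ D.sum := by
      have h1 : Multiset.card D • (1:ℤ) ≤ D.sum := Multiset.card_nsmul_le_sum
        (fun x hx => (hrange x (Multiset.mem_of_le hD hx)).2.1)
      simp only [nsmul_eq_mul, mul_one] at h1
      have : (2:ℤ) ≤ (Multiset.card D : ℤ) := by exact_mod_cast hc2
      omega
    rcases lt_trichotomy D.sum c with hlt | heq | hgt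
    · have : D.sum - c = 0 := dvd_small_eq hbpos hdvd (by omega) (by omega)
      omega
    · -- D.sum = c : fewer summands
      have hn' : n ∈ nfold A (N - Multiset.card D + 1) := by
        refine mem_nfold.2 ⟨c ::ₘ C, by simp [hCcard], ?_, ?_⟩
        · intro y hy
          rcases Multiset.mem_cons.1 hy with h | h
          · exact h ▸ hcA
          · exact hmA y (hCmem y h)
        · rw [Multiset.sum_cons, hCsum, ← heq]; ring
      have := hNmin _ (by omega) hn'
      omega
    · -- D.sum > c : smaller element of P(A) in the class
      have hsum' : (c ::ₘ C).sum = n - (D.sum - c) := by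
        rw [Multiset.sum_cons, hCsum]; ring
      have hpos : 1 ≤ (c ::ₘ C).sum := by
        have : 0 ≤ C.sum := Multiset.sum_nonneg fun y hy =>
          by have := (hrange y (hCmem y hy)).2.1; omega
        rw [Multiset.sum_cons]; omega
      have hPmem : ∀ y ∈ c ::ₘ C, y ∈ A := by
        intro y hy
        rcases Multiset.mem_cons.1 hy with h | h
        · exact h ▸ hcA
        · exact hmA y (hCmem y h)
      have hP : (c ::ₘ C).sum ∈ postP A := mem_postP.2 ⟨c ::ₘ C, by simp, hPmem, rfl⟩
      have hmod' : (c ::ₘ C).sum % b = a % b := by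
        obtain ⟨k, hk⟩ := hdvd
        rw [hsum', hk, show n - b * k = n + (-k) * b by ring, Int.add_mul_emod_self_right]
        exact hmod
      have := hnmin _ hpos hP hmod'
      rw [hsum'] at this
      omega
  -- ZMod setup
  set β := b.toNat with hβdef
  have hβ : (β : ℤ) = b := Int.toNat_of_nonneg (by omega)
  haveI : NeZero β := ⟨by omega⟩
  have hcast : ∀ u v : ℤ, ((u : ZMod β) = (v : ZMod β)) ↔ b ∣ (u - v) := by
    intro u v
    rw [ZMod.intCast_eq_intCast_iff, Int.modEq_iff_dvd, hβ]
    exact dvd_sub_comm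
  have hcast0 : ∀ u : ℤ, ((u : ZMod β) = 0) ↔ b ∣ u := by
    intro u
    rw [ZMod.intCast_zmod_eq_zero_iff_dvd, hβ]
  -- the middle layer A' of A
  set A' := (A.erase 0).erase b with hA'def
  have hA'mem : ∀ c : ℤ, c ∈ A' ↔ (c ∈ A ∧ 1 ≤ c ∧ c ≤ b - 1) := by
    intro c
    simp only [hA'def, Finset.mem_erase]
    constructor
    · rintro ⟨hcb, hc0, hcA⟩
      have := hmin c hcA; have := hmax c hcA
      exact ⟨hcA, by omega, by omega⟩
    · rintro ⟨hcA, hc1, hcb⟩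
      exact ⟨by omega, by omega, hcA⟩
  have hA'card : A'.card = ℓ := by
    have h1 : b ∈ A.erase 0 := Finset.mem_erase.2 ⟨by omega, hb⟩
    rw [hA'def, Finset.card_erase_of_mem h1, Finset.card_erase_of_mem h0, hcard]
    omega
  set T' := A'.image (fun c : ℤ => (c : ZMod β)) with hT'def
  have hT'card : T'.card = ℓ := by
    rw [hT'def, Finset.card_image_of_injOn, hA'card]
    intro u hu v hv huv
    have hu' := (hA'mem u).1 (Finset.mem_coe.1 hu)
    have hv' := (hA'mem v).1 (Finset.mem_coe.1 hv)
    have hd := (hcast u v).1 huv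
    have := dvd_small_eq hbpos hd (by omega) (by omega)
    omega
  have hT'mem0 : (0 : ZMod β) ∉ T' := by
    intro h
    obtain ⟨c, hc, hc0⟩ := Finset.mem_image.1 h
    have hc' := (hA'mem c).1 hc
    have hd := (hcast0 c).1 hc0
    have := dvd_small_eq hbpos hd (by omega) (by omega)
    omega
  -- the master counting fact, for an arbitrary ordering L of m
  have hug : ∀ L : List ℤ, (↑L : Multiset ℤ) = m →
      N + ℓ ≤ β ∧ (N + ℓ = β → ∀ r : ZMod β, r ≠ 0 →
        (∃ i : ℕ, i < N ∧ (((L.take (i+1)).sum : ℤ) : ZMod β) = r) ∨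
        ∃ c ∈ A', ((c : ℤ) : ZMod β) = r) := by
    intro L hL
    have hlen : L.length = N := by
      have : Multiset.card (↑L : Multiset ℤ) = N := by rw [hL, hcardm]
      simpa using this
    have hpre : ∀ i : ℕ, ((L.take i : List ℤ) : Multiset ℤ) ≤ m :=
      fun i => hL ▸ Multiset.coe_le.2 (List.take_sublist i L).subperm
    have hdiff : ∀ i j : ℕ, i < j → j < N →
        ¬ ((b:ℤ) ∣ ((L.take (j+1)).sum - (L.take (i+1)).sum)) := by
      intro i j hij hjN hdvd
      set D := (L.drop (i+1)).take (j - i) with hDdef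
      have hsplit : L.take (j+1) = L.take (i+1) ++ D := by
        have h := List.take_add (l := L) (i := i+1) (j := j-i)
        rw [show (i+1) + (j-i) = j+1 by omega] at h
        exact h
      have hDsum : (L.take (j+1)).sum = (L.take (i+1)).sum + D.sum := by
        rw [hsplit, List.sum_append]
      have hDsub : (D : Multiset ℤ) ≤ m :=
        hL ▸ Multiset.coe_le.2 ((List.take_sublist _ _).trans (List.drop_sublist _ _)).subperm
      have hDlen : D.length = j - i := by
        rw [hDdef, List.length_take, List.length_drop, hlen]
        omega
      have hD0 : (D : Multiset ℤ) ≠ 0 := by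
        intro h
        have : D.length = 0 := by simpa using congrArg Multiset.card h
        omega
      have hDm : (D : Multiset ℤ) ≠ m := by
        intro h
        have : D.length = N := by
          have h2 := congrArg Multiset.card h
          simpa [hcardm] using h2
        omega
      refine F1 (↑D) hDsub hD0 hDm ?_
      have h2 : ((D : Multiset ℤ)).sum = D.sum := by simp
      rw [h2, show D.sum = (L.take (j+1)).sum - (L.take (i+1)).sum by omega]
      exact hdvd
    have hS0 : ∀ i : ℕ, i < N → ¬ ((b:ℤ) ∣ (L.take (i+1)).sum) := by
      intro i hiN hdvd
      rcases eq_or_lt_of_le (Nat.succ_le_of_lt hiN) with he | hl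
      · have hLt : L.take (i+1) = L := by
          rw [show i+1 = N from he, ← hlen]; exact List.take_length (l := L)
        rw [hLt] at hdvd
        have hLsum : L.sum = n := by
          have h2 := congrArg Multiset.sum hL
          simpa [hsum] using h2
        rw [hLsum] at hdvd
        have : n % b = 0 := Int.emod_eq_zero_of_dvd hdvd
        omega
      · refine F1 (↑(L.take (i+1))) (hpre _) ?_ ?_ (by simpa using hdvd)
        · intro h
          have h2 : (L.take (i+1)).length = 0 := by simpa using congrArg Multiset.card h
          rw [List.length_take, hlen] at h2
          omega
        · intro h
          have h2 := congrArg Multiset.card h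
          rw [hcardm] at h2
          simp only [Multiset.coe_card, List.length_take, hlen] at h2
          omega
    have hST : ∀ i : ℕ, 1 ≤ i → i < N → ∀ c ∈ A', ¬ ((b:ℤ) ∣ ((L.take (i+1)).sum - c)) := by
      intro i hi1 hiN c hc hdvd
      have hc' := (hA'mem c).1 hc
      refine F2 (↑(L.take (i+1))) (hpre _) ?_ c hc'.1 hc'.2.1 hc'.2.2 (by simpa using hdvd)
      simp only [Multiset.coe_card, List.length_take, hlen]
      omega
    set f : ℕ → ZMod β := fun i => (((L.take (i+1)).sum : ℤ) : ZMod β) with hfdef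
    set S := (Finset.range N).image f with hSdef
    have hinj : Set.InjOn f ↑(Finset.range N) := by
      intro i hi j hj hij
      simp only [Finset.coe_range, Set.mem_Iio] at hi hj
      by_contra hne
      rcases Nat.lt_or_ge i j with h | h
      · exact hdiff i j h hj ((hcast _ _).1 hij.symm)
      · have hji : j < i := by omega
        exact hdiff j i hji hi ((hcast _ _).1 hij)
    have hScard : S.card = N := by
      rw [hSdef, Finset.card_image_of_injOn hinj, Finset.card_range]
    have hsub : S ∪ T' ⊆ Finset.univ.erase 0 := by
      intro r hr
      rw [Finset.mem_erase]
      refine ⟨?_, Finset.mem_univ r⟩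
      rcases Finset.mem_union.1 hr with h | h
      · obtain ⟨i, hi, rfl⟩ := Finset.mem_image.1 h
        rw [Finset.mem_range] at hi
        intro h0
        exact hS0 i hi ((hcast0 _).1 h0)
      · intro h0; rw [h0] at h; exact hT'mem0 h
    have hintercard : (S ∩ T').card ≤ 1 := by
      have hss : S ∩ T' ⊆ {f 0} := by
        intro r hr
        rw [Finset.mem_inter] at hr
        obtain ⟨i, hi, hfi⟩ := Finset.mem_image.1 hr.1
        rw [Finset.mem_range] at hi
        obtain ⟨c, hc, hceq⟩ := Finset.mem_image.1 hr.2
        rcases Nat.eq_zero_or_pos i with h | h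
        · rw [Finset.mem_singleton, ← hfi, h]
        · exact absurd ((hcast _ _).1 (hfi.trans hceq.symm)) (hST i h hi c hc)
      calc (S ∩ T').card ≤ ({f 0} : Finset (ZMod β)).card := Finset.card_le_card hss
        _ = 1 := Finset.card_singleton _
    have huniverase : (Finset.univ.erase (0 : ZMod β)).card = β - 1 := by
      rw [Finset.card_erase_of_mem (Finset.mem_univ _), Finset.card_univ, ZMod.card]
    have hcardle : (S ∪ T').card ≤ β - 1 := huniverase ▸ Finset.card_le_card hsub
    have hkey := Finset.card_union_add_card_inter S T'
    rw [hScard, hT'card] at hkey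
    have hβ4' : 4 ≤ β := by omega
    constructor
    · omega
    · intro heq r hr0
      have hcover : S ∪ T' = Finset.univ.erase 0 := by
        apply Finset.eq_of_subset_of_card_le hsub
        omega
      have hrmem : r ∈ S ∪ T' := by
        rw [hcover, Finset.mem_erase]; exact ⟨hr0, Finset.mem_univ r⟩
      rcases Finset.mem_union.1 hrmem with h | h
      · obtain ⟨i, hi, hieq⟩ := Finset.mem_image.1 h
        exact Or.inl ⟨i, Finset.mem_range.1 hi, hieq⟩
      · obtain ⟨c, hc, hceq⟩ := Finset.mem_image.1 h
        exact Or.inr ⟨c, hc, hceq⟩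
  obtain ⟨hbound, -⟩ := hug m.toList (Multiset.coe_toList m)
  constructor
  · omega
  · intro hNeq hN3
    have hNℓβ : N + ℓ = β := by omega
    have hmne : m ≠ 0 := by
      intro h; rw [h] at hcardm; simp at hcardm; omega
    -- Step: any two entries of m are equal
    have hpair : ∀ u v w : ℤ, (u ::ₘ v ::ₘ 0) ≤ m → (u ::ₘ w ::ₘ 0) ≤ m → v = w := by
      intro u v w huv huw
      have hum : u ∈ m := Multiset.mem_of_le huv (by simp)
      have hvm : v ∈ m := Multiset.mem_of_le huv (by simp)
      have hwm : w ∈ m := Multiset.mem_of_le huw (by simp)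
      obtain ⟨-, hu1, hub⟩ := hrange u hum
      obtain ⟨hvA, hv1, hvb⟩ := hrange v hvm
      obtain ⟨-, hw1, hwb⟩ := hrange w hwm
      set rest := m - (u ::ₘ w ::ₘ 0) with hrest
      have hrw : m = u ::ₘ w ::ₘ rest := by
        have h2 : (u ::ₘ w ::ₘ 0) + rest = m := by
          rw [hrest, add_comm]; exact tsub_add_cancel_of_le huw
        rw [← h2]
        simp [Multiset.cons_add]
      set L : List ℤ := u :: w :: rest.toList with hLdef
      have hL : (↑L : Multiset ℤ) = m := by
        rw [hLdef]
        show (u ::ₘ ↑(w :: rest.toList) : Multiset ℤ) = m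
        rw [show ((w :: rest.toList : List ℤ) : Multiset ℤ) = w ::ₘ ↑rest.toList from rfl,
          Multiset.coe_toList, hrw]
      have hpairle : (u ::ₘ v ::ₘ 0) ≠ m := by
        intro h
        have := congrArg Multiset.card h
        simp [hcardm] at this
        omega
      have hr0 : (((u + v : ℤ)) : ZMod β) ≠ 0 := by
        intro h
        have hd := (hcast0 _).1 h
        exact F1 (u ::ₘ v ::ₘ 0) huv (by simp) hpairle (by simpa using hd)
      rcases (hug L hL).2 hNℓβ ((u + v : ℤ) : ZMod β) hr0 with ⟨i, hiN, hieq⟩ | ⟨c, hc, hceq⟩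
      · rcases Nat.eq_zero_or_pos i with h0i | h1i
        · exfalso
          rw [h0i] at hieq
          have ht1 : L.take 1 = [u] := rfl
          rw [ht1] at hieq
          have hd := (hcast _ _).1 hieq
          have hdv : (b:ℤ) ∣ v := by
            obtain ⟨t, ht⟩ := hd
            exact ⟨-t, by simp at ht ⊢; linarith⟩
          refine F1 (v ::ₘ 0) (by simpa using hvm) (by simp) ?_ (by simpa using hdv)
          intro h
          have := congrArg Multiset.card h
          simp [hcardm] at this
          omega
        rcases eq_or_lt_of_le (show 1 ≤ i from h1i) with h1e | h2i
        · -- i = 1 : u + w ≡ u + v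
          rw [← h1e] at hieq
          have ht2 : L.take 2 = [u, w] := rfl
          rw [ht2] at hieq
          have hd := (hcast _ _).1 hieq
          have : u + w - (u + v) = 0 := dvd_small_eq hbpos (by simpa using hd) (by omega) (by omega)
          omega
        · -- i ≥ 2
          exfalso
          set Q := (L.drop 1).take i with hQdef
          have hsplit : L.take (i+1) = L.take 1 ++ Q := by
            have h2 := List.take_add (l := L) (i := 1) (j := i)
            rw [show 1 + i = i + 1 by omega] at h2
            exact h2
          have hQsum : (L.take (i+1)).sum = u + Q.sum := by
            rw [hsplit, List.sum_append]
            simp [show L.take 1 = [u] from rfl]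
          have hQsub : (Q : Multiset ℤ) ≤ m :=
            hL ▸ Multiset.coe_le.2 ((List.take_sublist _ _).trans (List.drop_sublist _ _)).subperm
          have hQcard : Q.length = i := by
            rw [hQdef, List.length_take, List.length_drop]
            have : L.length = N := by
              have h2 : Multiset.card (↑L : Multiset ℤ) = N := by rw [hL, hcardm]
              simpa using h2
            omega
          refine F2 (↑Q) hQsub (by simpa [hQcard] using (show 2 ≤ i from h2i)) v hvA hv1 hvb ?_
          have hd := (hcast _ _).1 hieq
          rw [hQsum] at hd
          have h3 : ((Q : Multiset ℤ)).sum = Q.sum := by simp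
          rw [h3, show Q.sum - v = u + Q.sum - (u + v) by ring]
          exact hd
      · -- residue is in T' : contradiction with F2 on the pair
        exfalso
        have hc' := (hA'mem c).1 hc
        have hd := (hcast _ _).1 hceq.symm
        refine F2 (u ::ₘ v ::ₘ 0) huv (by simp) c hc'.1 hc'.2.1 hc'.2.2 ?_
        simpa using hd
    -- all entries of m are equal
    have hallx : ∃ x : ℤ, m = Multiset.replicate N x := by
      obtain ⟨x, hx⟩ := Multiset.exists_mem_of_ne_zero hmne
      refine ⟨x, Multiset.eq_replicate.2 ⟨hcardm, ?_⟩⟩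
      intro y hy
      by_contra hne
      obtain ⟨t, ht⟩ := Multiset.exists_cons_of_mem hy
      have hxt : x ∈ t := by
        have h2 := hx; rw [ht] at h2
        rcases Multiset.mem_cons.1 h2 with h | h
        · exact absurd h.symm hne
        · exact h
      obtain ⟨t2, ht2⟩ := Multiset.exists_cons_of_mem hxt
      have ht2ne : t2 ≠ 0 := by
        intro h
        rw [ht, ht2, h] at hcardm; simp at hcardm; omega
      obtain ⟨z, hz⟩ := Multiset.exists_mem_of_ne_zero ht2ne
      have hm2 : m = y ::ₘ x ::ₘ t2 := by rw [ht, ht2]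
      have hp1 : (y ::ₘ x ::ₘ 0) ≤ m := by
        rw [hm2]
        exact Multiset.cons_le_cons y (Multiset.cons_le_cons x (Multiset.zero_le t2))
      have hp2 : (y ::ₘ z ::ₘ 0) ≤ m := by
        rw [hm2]
        refine Multiset.cons_le_cons y ?_
        exact Multiset.singleton_le.2 (Multiset.mem_cons_of_mem hz)
      have hm3 : m = x ::ₘ y ::ₘ t2 := by
        rw [hm2]; exact (Multiset.cons_swap x y t2).symm
      have hp3 : (x ::ₘ y ::ₘ 0) ≤ m := by
        rw [hm3]
        exact Multiset.cons_le_cons x (Multiset.cons_le_cons y (Multiset.zero_le t2))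
      have hp4 : (x ::ₘ z ::ₘ 0) ≤ m := by
        rw [hm3]
        refine Multiset.cons_le_cons x ?_
        exact Multiset.singleton_le.2 (Multiset.mem_cons_of_mem hz)
      have e1 : x = z := hpair y x z hp1 hp2
      have e2 : y = z := hpair x y z hp3 hp4
      exact hne (by omega)
    obtain ⟨x, hmx⟩ := hallx
    have hxm : x ∈ m := by rw [hmx]; exact Multiset.mem_replicate.2 ⟨by omega, rfl⟩
    obtain ⟨hxA, hx1, hxb1⟩ := hrange x hxm
    have hnNx : n = (N : ℤ) * x := by
      rw [← hsum, hmx, Multiset.sum_replicate, nsmul_eq_mul]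
    -- integer form of the covering property
    have hcovZ : ∀ c : ℤ, 1 ≤ c → c ≤ b - 1 → c ∉ A →
        ∃ k : ℕ, 1 ≤ k ∧ k ≤ N ∧ ((b:ℤ) ∣ (c - (k : ℤ) * x)) := by
      intro c hc1 hcb hcA
      have hLrep : ((List.replicate N x : List ℤ) : Multiset ℤ) = m := by
        rw [Multiset.coe_replicate, hmx]
      have hr0 : ((c : ℤ) : ZMod β) ≠ 0 := by
        intro h
        have hd := (hcast0 _).1 h
        have := dvd_small_eq hbpos hd (by omega) (by omega)
        omega
      rcases (hug _ hLrep).2 hNℓβ ((c : ℤ) : ZMod β) hr0 with ⟨i, hiN, hieq⟩ | ⟨c', hc', hceq⟩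
      · refine ⟨i+1, by omega, by omega, ?_⟩
        have htake : (List.replicate N x).take (i+1) = List.replicate (i+1) x := by
          rw [List.take_replicate]; congr 1; omega
        rw [htake] at hieq
        have hsr : (List.replicate (i+1) x).sum = ((i+1 : ℕ) : ℤ) * x := by
          rw [List.sum_replicate, nsmul_eq_mul]
        rw [hsr] at hieq
        have hd := (hcast _ _).1 hieq
        obtain ⟨t, ht⟩ := hd
        refine ⟨-t, ?_⟩
        push_cast at ht ⊢
        linarith
      · have hd := (hcast _ _).1 hceq
        have hc'r := (hA'mem c').1 hc'
        have := dvd_small_eq hbpos hd (by omega) (by omega)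
        have heqc : c' = c := by omega
        exact absurd (heqc ▸ hc'r.1) hcA
    have hdna : (b:ℤ) ∣ (n - a) := Int.ModEq.dvd (show Int.ModEq b a n from hmod.symm)
    rcases eq_or_lt_of_le hx1 with hx1e | hx2
    · -- x = 1 : A has the claimed structure
      have hxe : x = 1 := hx1e.symm
      have h1A : (1:ℤ) ∈ A := hxe ▸ hxA
      -- n = a
      have haP : a ∈ postP A := by
        refine mem_postP.2 ⟨Multiset.replicate a.toNat 1, ?_, ?_, ?_⟩
        · intro h
          have := congrArg Multiset.card h
          simp [Multiset.card_replicate] at this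
          omega
        · intro y hy
          rw [Multiset.eq_of_mem_replicate hy]
          exact h1A
        · rw [Multiset.sum_replicate, nsmul_eq_mul, mul_one]
          exact Int.toNat_of_nonneg (by omega)
      have hna : n = a := by
        have h1 := hnmin a (by omega) haP rfl
        have h2 := mod_le hbpos hn1 (by omega) (by omega) hmod
        omega
      have hnN : n = (N:ℤ) := by rw [hnNx, hxe, mul_one]
      have hNb2 : (N:ℤ) ≤ b - 2 := by omega
      have hforb : ∀ c : ℤ, 2 ≤ c → c ≤ (N:ℤ) → c ∉ A := by
        intro c hc2 hcN hcA
        have h2N : c.toNat ≤ N := by omega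
        have hD : Multiset.replicate c.toNat 1 ≤ m := by
          rw [hmx, hxe]
          exact (Multiset.replicate_le_replicate 1).2 h2N
        refine F2 (Multiset.replicate c.toNat 1) hD ?_ c hcA (by omega) (by omega) ?_
        · rw [Multiset.card_replicate]; omega
        · rw [Multiset.sum_replicate, nsmul_eq_mul, mul_one, Int.toNat_of_nonneg (by omega)]
          simp
      have hincl : ∀ c : ℤ, (N:ℤ)+1 ≤ c → c ≤ b - 1 → c ∈ A := by
        intro c hcN hcb
        by_contra hcA
        obtain ⟨k, hk1, hkN, hkd⟩ := hcovZ c (by omega) hcb hcA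
        rw [hxe, mul_one] at hkd
        have hkNz : (k:ℤ) ≤ (N:ℤ) := by exact_mod_cast hkN
        have hk1z : (1:ℤ) ≤ (k:ℤ) := by exact_mod_cast hk1
        have := dvd_small_eq hbpos hkd (by omega) (by omega)
        omega
      ext c
      simp only [Finset.mem_union, Finset.mem_insert, Finset.mem_singleton, Finset.mem_Icc]
      constructor
      · intro hcA
        have hc0 := hmin c hcA
        have hcb := hmax c hcA
        rcases eq_or_lt_of_le hc0 with h | h
        · exact Or.inl (Or.inl h.symm)
        rcases eq_or_lt_of_le (show c ≤ b from hcb) with h' | h'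
        · exact Or.inr ⟨by omega, by omega⟩
        · rcases eq_or_lt_of_le (show (1:ℤ) ≤ c by omega) with h1 | h1
          · exact Or.inl (Or.inr h1.symm)
          · refine Or.inr ⟨?_, by omega⟩
            by_contra hlt
            push_neg at hlt
            exact hforb c (by omega) (by omega) hcA
      · intro h
        rcases h with (h | h) | h
        · exact h ▸ h0
        · exact h ▸ h1A
        · rcases eq_or_lt_of_le h.2 with h' | h'
          · exact h' ▸ hb
          · exact hincl c h.1 (by omega)
    · -- x ≥ 2 : derive a contradiction
      exfalso
      have hN3' : (3:ℤ) ≤ (N:ℤ) := by exact_mod_cast hN3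
      have hx0 : (0:ℤ) ≤ x := by omega
      by_cases h1A : (1:ℤ) ∈ A
      · -- 1 ∈ A : a better representation exists
        have haP : a ∈ postP A := by
          refine mem_postP.2 ⟨Multiset.replicate a.toNat 1, ?_, ?_, ?_⟩
          · intro h
            have := congrArg Multiset.card h
            simp [Multiset.card_replicate] at this
            omega
          · intro y hy
            rw [Multiset.eq_of_mem_replicate hy]
            exact h1A
          · rw [Multiset.sum_replicate, nsmul_eq_mul, mul_one]
            exact Int.toNat_of_nonneg (by omega)
        have hna : n = a := by
          have h1 := hnmin a (by omega) haP rfl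
          have h2 := mod_le hbpos hn1 (by omega) (by omega) hmod
          omega
        have hNxb : (N:ℤ) * x ≤ b - 1 := by rw [← hnNx]; omega
        have h3x : 3 * x ≤ (N:ℤ) * x := mul_le_mul_of_nonneg_right hN3' hx0
        have h2x1A : 2*x + 1 ∈ A := by
          by_contra hno
          obtain ⟨k, hk1, hkN, hkd⟩ := hcovZ (2*x+1) (by linarith) (by linarith) hno
          have hk1z : (1:ℤ) ≤ (k:ℤ) := by exact_mod_cast hk1
          have hkNz : (k:ℤ) ≤ (N:ℤ) := by exact_mod_cast hkN
          have hkx1 : 1 * x ≤ (k:ℤ) * x := mul_le_mul_of_nonneg_right hk1z hx0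
          have hkxN : (k:ℤ) * x ≤ (N:ℤ) * x := mul_le_mul_of_nonneg_right hkNz hx0
          have hz := dvd_small_eq hbpos hkd (by linarith) (by linarith)
          have hxd : x ∣ 1 := ⟨(k:ℤ) - 2, by linear_combination hz⟩
          have := Int.le_of_dvd one_pos hxd
          omega
        have hxm1A : x - 1 ∈ A := by
          by_contra hno
          obtain ⟨k, hk1, hkN, hkd⟩ := hcovZ (x-1) (by omega) (by omega) hno
          have hk1z : (1:ℤ) ≤ (k:ℤ) := by exact_mod_cast hk1
          have hkNz : (k:ℤ) ≤ (N:ℤ) := by exact_mod_cast hkN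
          have hkx1 : 1 * x ≤ (k:ℤ) * x := mul_le_mul_of_nonneg_right hk1z hx0
          have hkxN : (k:ℤ) * x ≤ (N:ℤ) * x := mul_le_mul_of_nonneg_right hkNz hx0
          have hz := dvd_small_eq hbpos hkd (by linarith) (by linarith)
          linarith
        have hrep : n ∈ nfold A (N - 1) := by
          refine mem_nfold.2 ⟨(2*x+1) ::ₘ (x-1) ::ₘ Multiset.replicate (N-3) x, ?_, ?_, ?_⟩
          · simp [Multiset.card_replicate]
            omega
          · intro y hy
            rcases Multiset.mem_cons.1 hy with h | h
            · exact h ▸ h2x1A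
            rcases Multiset.mem_cons.1 h with h' | h'
            · exact h' ▸ hxm1A
            · rw [Multiset.eq_of_mem_replicate h']; exact hxA
          · rw [Multiset.sum_cons, Multiset.sum_cons, Multiset.sum_replicate, nsmul_eq_mul,
              Nat.cast_sub hN3, hnNx]
            push_cast
            ring
        have := hNmin (N-1) (by omega) hrep
        omega
      · -- 1 ∉ A : counting contradiction
        obtain ⟨k₀, hk01, hk0N, hk0d⟩ := hcovZ 1 le_rfl (by omega) h1A
        have hk01z : (1:ℤ) ≤ (k₀:ℤ) := by exact_mod_cast hk01
        have hk0Nz : (k₀:ℤ) ≤ (N:ℤ) := by exact_mod_cast hk0N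
        have hk0x1 : 1 * x ≤ (k₀:ℤ) * x := mul_le_mul_of_nonneg_right hk01z hx0
        have hbk : b ≤ (k₀:ℤ) * x - 1 := by
          have hd : (b:ℤ) ∣ ((k₀:ℤ)*x - 1) := by
            obtain ⟨t, ht⟩ := hk0d
            exact ⟨-t, by linarith⟩
          exact Int.le_of_dvd (by linarith) hd
        have hkxNx : (k₀:ℤ) * x ≤ (N:ℤ) * x := mul_le_mul_of_nonneg_right hk0Nz hx0
        have hnb1 : b + 1 ≤ n := by rw [hnNx]; linarith
        -- no two elements of A' sum to a mod b
        have hpairc : ∀ c ∈ A', ∀ c' ∈ A', ¬ ((b:ℤ) ∣ (c + c' - a)) := by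
          intro c hc c' hc' hdvd
          have hcr := (hA'mem c).1 hc
          have hcr' := (hA'mem c').1 hc'
          have hccmem : ∀ y ∈ (c ::ₘ c' ::ₘ 0 : Multiset ℤ), y ∈ A := by
            intro y hy
            rcases Multiset.mem_cons.1 hy with h | h
            · exact h ▸ hcr.1
            rcases Multiset.mem_cons.1 h with h' | h'
            · exact h' ▸ hcr'.1
            · simp at h'
          have hccP : c + c' ∈ postP A :=
            mem_postP.2 ⟨c ::ₘ c' ::ₘ 0, by simp, hccmem, by simp⟩
          have hmod' : (c + c') % b = a % b := by
            obtain ⟨t, ht⟩ := hdvd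
            rw [show c + c' = a + t * b by linarith, Int.add_mul_emod_self_right]
          have hle := hnmin _ (by omega) hccP hmod'
          rcases eq_or_lt_of_le hle with he | hlt
          · have h2 : n ∈ nfold A 2 :=
              mem_nfold.2 ⟨c ::ₘ c' ::ₘ 0, by simp, hccmem, by simp; omega⟩
            have := hNmin 2 (by omega) h2
            omega
          · have hd2 : (b:ℤ) ∣ (c + c' - n) := by
              have h3 := dvd_sub hdvd hdna
              convert h3 using 1
              · rfl
              ring
            have := Int.le_of_dvd (by omega) hd2
            omega
        -- every residue class mod b contains a multiple k x, 0 ≤ k ≤ N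
        have hall : ∀ c : ℤ, 0 ≤ c → c ≤ b - 1 → ∃ k : ℕ, k ≤ N ∧ ((b:ℤ) ∣ (c - (k:ℤ) * x)) := by
          intro c hc0 hcb
          rcases eq_or_lt_of_le hc0 with h0c | h1c
          · exact ⟨0, by omega, by rw [← h0c]; simp⟩
          by_cases hcA : c ∈ A
          · have hcA' : c ∈ A' := (hA'mem c).2 ⟨hcA, by omega, hcb⟩
            set c'' := (a - c) % b with hc''def
            have hc''0 : 0 ≤ c'' := Int.emod_nonneg _ (by omega)
            have hc''b : c'' < b := Int.emod_lt_of_pos _ hbpos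
            have hdc'' : (b:ℤ) ∣ (a - c - c'') := Int.dvd_self_sub_of_emod_eq rfl
            rcases eq_or_lt_of_le hc''0 with hz | hposc
            · -- c ≡ a ≡ N x
              refine ⟨N, le_rfl, ?_⟩
              have hd1 : (b:ℤ) ∣ (a - c) := by rw [← hz] at hdc''; simpa using hdc''
              have h3 : (b:ℤ) ∣ (c - n) := by
                have := dvd_add hd1 hdna
                have h4 := dvd_neg.2 this
                convert h4 using 1
                · rfl
                ring
              rw [← hnNx]
              exact h3
            · by_cases hc''A : c'' ∈ A
              · exfalso
                have hmem'' : c'' ∈ A' := (hA'mem c'').2 ⟨hc''A, by omega, by omega⟩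
                refine hpairc c hcA' c'' hmem'' ?_
                have := dvd_neg.2 hdc''
                convert this using 1
                · rfl
                ring
              · obtain ⟨k, hk1, hkN, hkd⟩ := hcovZ c'' (by omega) (by omega) hc''A
                refine ⟨N - k, by omega, ?_⟩
                have hcast' : ((N - k : ℕ) : ℤ) = (N:ℤ) - (k:ℤ) := by
                  rw [Nat.cast_sub hkN]
                rw [hcast']
                have h5 : (b:ℤ) ∣ (c + (k:ℤ)*x - n) := by
                  have h6 := dvd_add (dvd_add (dvd_neg.2 hdc'') (dvd_neg.2 hkd)) (dvd_neg.2 hdna)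
                  convert h6 using 1
                  · rfl
                  ring
                have h7 : c - ((N:ℤ)-(k:ℤ))*x = c + (k:ℤ)*x - n := by
                  rw [hnNx]; ring
                rw [h7]
                exact h5
          · obtain ⟨k, hk1, hkN, hkd⟩ := hcovZ c (by omega) hcb hcA
            exact ⟨k, hkN, hkd⟩
        -- counting
        set V := (Finset.range (N+1)).image (fun k : ℕ => (((k:ℤ) * x : ℤ) : ZMod β)) with hVdef
        have huniv : (Finset.univ : Finset (ZMod β)) ⊆ V := by
          intro r _
          have hval : ((r.val : ℤ) : ZMod β) = r := by
            have h8 := ZMod.natCast_rightInverse (n := β) r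
            rw [show ((r.val : ℤ) : ZMod β) = ((r.val : ℕ) : ZMod β) by push_cast; rfl]
            exact h8
          have hvb : (r.val : ℤ) ≤ b - 1 := by
            have := ZMod.val_lt r
            omega
          obtain ⟨k, hkN, hkd⟩ := hall (r.val : ℤ) (by positivity) hvb
          refine Finset.mem_image.2 ⟨k, Finset.mem_range.2 (by omega), ?_⟩
          rw [← hval, hcast]
          have h9 := dvd_neg.2 hkd
          convert h9 using 1
          · rfl
          ring
        have hVcard : V.card ≤ N + 1 := by
          calc V.card ≤ (Finset.range (N+1)).card := Finset.card_image_le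
            _ = N + 1 := Finset.card_range _
        have hfin : β ≤ N + 1 := by
          have h1 : (Finset.univ : Finset (ZMod β)).card ≤ V.card := Finset.card_le_card huniv
          rw [Finset.card_univ, ZMod.card] at h1
          omega
        omega

lemma sum_ne_one {s : Multiset ℤ} (h : ∀ e ∈ s, e = 0 ∨ 2 ≤ e) : 0 ≤ s.sum ∧ s.sum ≠ 1 := by
  induction s using Multiset.induction_on with
  | empty => simp
  | cons a s ih =>
    have ha := h a (Multiset.mem_cons_self a s)
    have hs := ih (fun e he => h e (Multiset.mem_cons_of_mem he))
    rw [Multiset.sum_cons]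
    constructor <;> omega

lemma single_nfold {A : Finset ℤ} {r : ℤ} (h : r ∈ A) : r ∈ nfold A 1 :=
  mem_nfold.2 ⟨{r}, by simp, by simpa using h, by simp⟩

lemma pair_nfold {A : Finset ℤ} {u v : ℤ} (hu : u ∈ A) (hv : v ∈ A) : u + v ∈ nfold A 2 := by
  refine mem_nfold.2 ⟨u ::ₘ v ::ₘ 0, by simp, ?_, by simp⟩
  intro y hy
  rcases Multiset.mem_cons.1 hy with h | h
  · exact h ▸ hu
  rcases Multiset.mem_cons.1 h with h' | h'
  · exact h' ▸ hv
  · simp at h'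

lemma ones_nfold {A : Finset ℤ} (h1 : (1:ℤ) ∈ A) {r : ℤ} (hr : 1 ≤ r) :
    r ∈ nfold A r.toNat := by
  refine mem_nfold.2 ⟨Multiset.replicate r.toNat 1, by simp, ?_, ?_⟩
  · intro y hy
    rw [Multiset.eq_of_mem_replicate hy]; exact h1
  · rw [Multiset.sum_replicate, nsmul_eq_mul, mul_one]
    exact Int.toNat_of_nonneg (by omega)

lemma nmin_eq_self {A : Finset ℤ} {b r : ℤ} (hb : 0 < b) (hr1 : 1 ≤ r) (hrb : r ≤ b - 1)
    (hP : r ∈ postP A) : nmin A b r = r := by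
  refine IsLeast.csInf_eq ⟨⟨hr1, hP, rfl⟩, ?_⟩
  rintro t ⟨ht1, -, htm⟩
  exact mod_le hb ht1 (by omega) (by omega) htm

lemma Nmin_le {A : Finset ℤ} {b r : ℤ} {M : ℕ} (h1 : 1 ≤ M) (h : nmin A b r ∈ nfold A M) :
    Nmin A b r ≤ M := Nat.sInf_le ⟨h1, h⟩

-- Family 2 : A = [0,b] \ {a0}
lemma fam2_Nstar (b a0 : ℤ) (hb : 4 ≤ b) (ha1 : 1 ≤ a0) (ha2 : a0 ≤ b - 1) :
    Nstar (Finset.Icc 0 b \ {a0}) b = 2 := by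
  set A := Finset.Icc 0 b \ {a0} with hA
  have hbpos : (0:ℤ) < b := by omega
  have hmemA : ∀ c : ℤ, c ∈ A ↔ (0 ≤ c ∧ c ≤ b ∧ c ≠ a0) := by
    intro c
    simp [hA, Finset.mem_sdiff, Finset.mem_Icc]
    tauto
  have ha0A : a0 ∉ A := by
    intro h; exact ((hmemA a0).1 h).2.2 rfl
  -- the nmin value in the missing class
  have hmain : Nmin A b a0 = 2 ∧ ∀ r ∈ Finset.Icc (1:ℤ) (b-1), Nmin A b r ≤ 2 := by
    have hna0 : (nmin A b a0 ∈ nfold A 2) ∧ (nmin A b a0 ∉ nfold A 1) := by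
      rcases eq_or_lt_of_le ha1 with h1 | h2
      · -- a0 = 1
        have hv : nmin A b a0 = b + 1 := by
          refine IsLeast.csInf_eq ⟨⟨by omega, ?_, ?_⟩, ?_⟩
          · exact ⟨2, one_le_two, by
              have h2A : (2:ℤ) ∈ A := (hmemA 2).2 ⟨by omega, by omega, by omega⟩
              have hbA : (b-1:ℤ) ∈ A := (hmemA (b-1)).2 ⟨by omega, by omega, by omega⟩
              have := pair_nfold h2A hbA
              rwa [show (2:ℤ) + (b-1) = b + 1 by ring] at this⟩
          · rw [show b + 1 = a0 + 1 * b by omega, Int.add_mul_emod_self_right]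
          · rintro t ⟨ht1, htP, htm⟩
            by_contra hlt
            push_neg at hlt
            have hta : t = 1 := by
              rcases eq_or_lt_of_le (show t ≤ b by omega) with he | hl
              · rw [he, Int.emod_self, Int.emod_eq_of_lt (by omega) (by omega)] at htm
                omega
              · rw [Int.emod_eq_of_lt (by omega) (by omega),
                  Int.emod_eq_of_lt (by omega) (by omega)] at htm
                omega
            obtain ⟨ms, hms0, hmsA, hmssum⟩ := mem_postP.1 htP
            have := sum_ne_one (s := ms) ?_
            · rw [hmssum, hta] at this
              exact this.2 rfl
            · intro e he
              have := (hmemA e).1 (hmsA e he)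
              omega
        constructor
        · rw [hv]
          have h2A : (2:ℤ) ∈ A := (hmemA 2).2 ⟨by omega, by omega, by omega⟩
          have hbA : (b-1:ℤ) ∈ A := (hmemA (b-1)).2 ⟨by omega, by omega, by omega⟩
          have := pair_nfold h2A hbA
          rwa [show (2:ℤ) + (b-1) = b + 1 by ring] at this
        · rw [hv]
          intro h
          obtain ⟨ms, hc, hmsA, hmssum⟩ := mem_nfold.1 h
          rw [Multiset.card_eq_one] at hc
          obtain ⟨e, rfl⟩ := hc
          simp at hmssum
          have := (hmemA e).1 (hmsA e (by simp))
          omega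
      · -- a0 ≥ 2
        have hv : nmin A b a0 = a0 := by
          refine nmin_eq_self hbpos ha1 ha2 ⟨2, one_le_two, ?_⟩
          have h1A : (1:ℤ) ∈ A := (hmemA 1).2 ⟨by omega, by omega, by omega⟩
          have h2A : (a0-1:ℤ) ∈ A := (hmemA (a0-1)).2 ⟨by omega, by omega, by omega⟩
          have := pair_nfold h1A h2A
          rwa [show (1:ℤ) + (a0-1) = a0 by ring] at this
        constructor
        · rw [hv]
          have h1A : (1:ℤ) ∈ A := (hmemA 1).2 ⟨by omega, by omega, by omega⟩
          have h2A : (a0-1:ℤ) ∈ A := (hmemA (a0-1)).2 ⟨by omega, by omega, by omega⟩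
          have := pair_nfold h1A h2A
          rwa [show (1:ℤ) + (a0-1) = a0 by ring] at this
        · rw [hv]
          intro h
          obtain ⟨ms, hc, hmsA, hmssum⟩ := mem_nfold.1 h
          rw [Multiset.card_eq_one] at hc
          obtain ⟨e, rfl⟩ := hc
          simp at hmssum
          exact ha0A (hmssum ▸ hmsA e (by simp))
    constructor
    · -- Nmin a0 = 2
      have hub := Nmin_le (by omega) hna0.1
      have hne : {M : ℕ | 1 ≤ M ∧ nmin A b a0 ∈ nfold A M}.Nonempty := ⟨2, by omega, hna0.1⟩
      have hmem : 1 ≤ Nmin A b a0 ∧ nmin A b a0 ∈ nfold A (Nmin A b a0) := Nat.sInf_mem hne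
      have : Nmin A b a0 ≠ 1 := by
        intro h
        have h2 : nmin A b a0 ∈ nfold A (Nmin A b a0) := hmem.2
        rw [h] at h2
        exact hna0.2 h2
      have h1 : 1 ≤ Nmin A b a0 := hmem.1
      omega
    · -- all Nmin ≤ 2
      intro r hr
      rw [Finset.mem_Icc] at hr
      by_cases hra : r = a0
      · rw [hra]
        exact Nmin_le (by omega) hna0.1
      · have hrA : r ∈ A := (hmemA r).2 ⟨by omega, by omega, hra⟩
        have hv : nmin A b r = r :=
          nmin_eq_self hbpos (by omega) (by omega) ⟨1, le_rfl, single_nfold hrA⟩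
        have : Nmin A b r ≤ 1 := Nmin_le le_rfl (by rw [hv]; exact single_nfold hrA)
        omega
  refine le_antisymm ?_ ?_
  · exact Finset.sup_le hmain.2
  · have h := Finset.le_sup (f := fun r => Nmin A b r)
      (Finset.mem_Icc.2 ⟨ha1, ha2⟩ : a0 ∈ Finset.Icc (1:ℤ) (b-1))
    rw [show Nstar A b = (Finset.Icc 1 (b-1)).sup (fun r => Nmin A b r) from rfl, ← hmain.1]
    exact h

-- Family 3 : A = {0,1} ∪ [a0+1, b]
lemma fam3_Nstar (b a0 : ℤ) (hb : 4 ≤ b) (ha2 : 2 ≤ a0) (hab : a0 ≤ b - 2) :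
    (Nstar ({0, 1} ∪ Finset.Icc (a0+1) b) b : ℤ) = a0 := by
  set A := ({0, 1} ∪ Finset.Icc (a0+1) b : Finset ℤ) with hA
  have hbpos : (0:ℤ) < b := by omega
  have hmemA : ∀ c : ℤ, c ∈ A ↔ (c = 0 ∨ c = 1 ∨ (a0 + 1 ≤ c ∧ c ≤ b)) := by
    intro c
    simp [hA, Finset.mem_union, Finset.mem_insert, Finset.mem_Icc]
  have h1A : (1:ℤ) ∈ A := (hmemA 1).2 (Or.inr (Or.inl rfl))
  have hnmin : ∀ r : ℤ, 1 ≤ r → r ≤ b - 1 → nmin A b r = r := by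
    intro r h1 h2
    refine nmin_eq_self hbpos h1 h2 ⟨r.toNat, by omega, ones_nfold h1A h1⟩
  have hsmall : ∀ r : ℤ, 1 ≤ r → r ≤ a0 → Nmin A b r = r.toNat := by
    intro r h1 h2
    have hv := hnmin r h1 (by omega)
    have hub : Nmin A b r ≤ r.toNat := Nmin_le (by omega) (by rw [hv]; exact ones_nfold h1A h1)
    have hne : {M : ℕ | 1 ≤ M ∧ nmin A b r ∈ nfold A M}.Nonempty :=
      ⟨r.toNat, by omega, by rw [hv]; exact ones_nfold h1A h1⟩
    have hmem : 1 ≤ Nmin A b r ∧ nmin A b r ∈ nfold A (Nmin A b r) := Nat.sInf_mem hne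
    have hlb : r.toNat ≤ Nmin A b r := by
      have h3 : r ∈ nfold A (Nmin A b r) := by
        have h4 := hmem.2
        rwa [hv] at h4
      obtain ⟨ms, hc, hmsA, hmssum⟩ := mem_nfold.1 h3
      have hnn : ∀ e ∈ ms, (0:ℤ) ≤ e := by
        intro e he
        have := (hmemA e).1 (hmsA e he)
        omega
      have hone : ∀ e ∈ ms, e ≤ (1:ℤ) := by
        intro e he
        have hcases := (hmemA e).1 (hmsA e he)
        have : e ≤ ms.sum := Multiset.single_le_sum hnn e he
        rw [hmssum] at this
        omega
      have := Multiset.sum_le_card_nsmul ms 1 hone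
      rw [hmssum, hc, nsmul_eq_mul, mul_one] at this
      omega
    omega
  have hNa0 : Nmin A b a0 = a0.toNat := hsmall a0 (by omega) le_rfl
  have hfinal : Nstar A b = a0.toNat := by
    refine le_antisymm ?_ ?_
    · refine Finset.sup_le ?_
      intro r hr
      rw [Finset.mem_Icc] at hr
      by_cases hra : r ≤ a0
      · rw [hsmall r hr.1 hra]; omega
      · push_neg at hra
        have hrA : r ∈ A := (hmemA r).2 (Or.inr (Or.inr ⟨by omega, by omega⟩))
        have hv := hnmin r hr.1 hr.2
        have : Nmin A b r ≤ 1 := Nmin_le le_rfl (by rw [hv]; exact single_nfold hrA)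
        omega
    · have h := Finset.le_sup (f := fun r => Nmin A b r)
        (Finset.mem_Icc.2 ⟨by omega, by omega⟩ : a0 ∈ Finset.Icc (1:ℤ) (b-1))
      rw [show Nstar A b = (Finset.Icc 1 (b-1)).sup (fun r => Nmin A b r) from rfl, ← hNa0]
      exact h
  rw [hfinal]
  omega

theorem stmt9 (A : Finset ℤ) (b : ℤ) (ℓ : ℕ)
    (hcard : A.card = ℓ + 2) (hℓ2 : 2 ≤ ℓ) (hℓb : (ℓ : ℤ) ≤ b - 2)
    (h0 : 0 ∈ A) (hb : b ∈ A)
    (hmin : ∀ a ∈ A, 0 ≤ a) (hmax : ∀ a ∈ A, a ≤ b)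
    (hgcd : A.gcd id = 1) :
    (Nstar A b : ℤ) ≤ b - (ℓ : ℤ) - 1 ∨
    (∃ a : ℤ, 1 ≤ a ∧ a ≤ b - 1 ∧ A = Finset.Icc 0 b \ {a} ∧
      Nstar A b = 2 ∧ b - (ℓ : ℤ) = 2) ∨
    (∃ a : ℤ, 2 ≤ a ∧ a ≤ b - 2 ∧ A = {0, 1} ∪ Finset.Icc (a + 1) b ∧
      (Nstar A b : ℤ) = b - (ℓ : ℤ)) := by
  have hb4 : (4:ℤ) ≤ b := by omega
  by_cases hfam3 : A = {0, 1} ∪ Finset.Icc ((b - (ℓ:ℤ)) + 1) b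
  · right; right
    refine ⟨b - (ℓ:ℤ), by omega, by omega, hfam3, ?_⟩
    rw [hfam3]
    exact fam3_Nstar b (b - (ℓ:ℤ)) hb4 (by omega) (by omega)
  · by_cases hl2 : (ℓ:ℤ) = b - 2
    · right; left
      have hsub : A ⊆ Finset.Icc 0 b := by
        intro c hc
        rw [Finset.mem_Icc]
        exact ⟨hmin c hc, hmax c hc⟩
      have hcardIcc : (Finset.Icc (0:ℤ) b).card = b.toNat + 1 := by
        rw [Int.card_Icc]
        omega
      have hCcard : ((Finset.Icc (0:ℤ) b) \ A).card = 1 := by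
        rw [Finset.card_sdiff_of_subset hsub, hcardIcc, hcard]
        omega
      obtain ⟨a0, ha0⟩ := Finset.card_eq_one.1 hCcard
      have ha0mem : a0 ∈ Finset.Icc (0:ℤ) b \ A := by rw [ha0]; simp
      rw [Finset.mem_sdiff, Finset.mem_Icc] at ha0mem
      have ha01 : 1 ≤ a0 := by
        rcases eq_or_lt_of_le ha0mem.1.1 with h | h
        · have : a0 ∈ A := by rw [← h]; exact h0
          exact absurd this ha0mem.2
        · omega
      have ha0b : a0 ≤ b - 1 := by
        rcases eq_or_lt_of_le ha0mem.1.2 with h | h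
        · have : a0 ∈ A := by rw [h]; exact hb
          exact absurd this ha0mem.2
        · omega
      have hAeq : A = Finset.Icc 0 b \ {a0} := by
        rw [← ha0]
        exact (Finset.sdiff_sdiff_eq_self hsub).symm
      refine ⟨a0, ha01, ha0b, hAeq, ?_, by omega⟩
      rw [hAeq]
      exact fam2_Nstar b a0 hb4 ha01 ha0b
    · left
      have hbl3 : 3 ≤ b - (ℓ:ℤ) := by omega
      have hK : ((b - (ℓ:ℤ) - 1).toNat : ℤ) = b - (ℓ:ℤ) - 1 := Int.toNat_of_nonneg (by omega)
      have hsup : Nstar A b ≤ (b - (ℓ:ℤ) - 1).toNat := by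
        refine Finset.sup_le ?_
        intro r hr
        rw [Finset.mem_Icc] at hr
        set Sn := {t : ℤ | 1 ≤ t ∧ t ∈ postP A ∧ t % b = r % b} with hSn
        by_cases hne : Sn.Nonempty
        · have hbdd : BddBelow Sn := ⟨1, fun t ht => ht.1⟩
          have hmemInf : nmin A b r ∈ Sn := Int.csInf_mem hne hbdd
          obtain ⟨hn1, hnP, hnmod⟩ := hmemInf
          have hSNne : {M : ℕ | 1 ≤ M ∧ nmin A b r ∈ nfold A M}.Nonempty := by
            obtain ⟨N₀, h1, h2⟩ := hnP
            exact ⟨N₀, h1, h2⟩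
          have hNmem : 1 ≤ Nmin A b r ∧ nmin A b r ∈ nfold A (Nmin A b r) :=
            Nat.sInf_mem hSNne
          have hkey := key A b ℓ hcard hℓ2 hℓb h0 hb hmin hmax r (nmin A b r) (Nmin A b r)
            hr.1 hr.2 hn1 hnmod hNmem.2 hNmem.1
            (fun m' h1 h2 h3 => csInf_le hbdd ⟨h1, h2, h3⟩)
            (fun M h1 h2 => Nat.sInf_le ⟨h1, h2⟩)
          rcases eq_or_lt_of_le hkey.1 with heq | hlt
          · exfalso
            have h3N : 3 ≤ Nmin A b r := by omega
            have hform := hkey.2 heq h3N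
            rw [heq] at hform
            exact hfam3 hform
          · omega
        · have hempty : Sn = ∅ := Set.not_nonempty_iff_eq_empty.1 hne
          have hnm : nmin A b r = 0 := by
            rw [show nmin A b r = sInf Sn from rfl, hempty, Int.csInf_empty]
          have h0n : nmin A b r ∈ nfold A 1 := by
            rw [hnm]
            exact single_nfold h0
          have := Nmin_le le_rfl h0n
          omega
      calc ((Nstar A b : ℕ) : ℤ) ≤ ((b - (ℓ:ℤ) - 1).toNat : ℤ) := by exact_mod_cast hsup
        _ = b - (ℓ:ℤ) - 1 := hK
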